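/- Assuming the Continuum Hypothesis, there exist two subsets A⁰, A¹ of the real line, each dense in itself with no least or greatest element and such that every open interval between two of their elements meets the set in exactly ℵ₁ points, which are incomparable under order-preserving embeddings: there is no order-preserving injection from A⁰ into A¹ and none from A¹ into A⁰. -/

import Mathlib

open Cardinal Set Function

noncomputable section

namespace SierpAux

/-- Extension of a function `ℚ → ℝ` to `ℝ` by suprema from below. -/
def ext (g : ℚ → ℝ) (x : ℝ) : ℝ := sSup (g '' {q : ℚ | (q : ℝ) < x})

lemma ext_monotone {g : ℚ → ℝ} (hg : Monotone g) : Monotone (ext g) := by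
  intro x y hxy
  obtain ⟨q₀, hq₀⟩ := exists_rat_lt x
  obtain ⟨q₁, hq₁⟩ := exists_rat_gt y
  apply csSup_le_csSup
  · refine ⟨g q₁, ?_⟩
    rintro z ⟨q, hq, rfl⟩
    exact hg (by exact_mod_cast (lt_trans hq hq₁).le)
  · exact ⟨g q₀, ⟨q₀, hq₀, rfl⟩⟩
  · exact image_mono fun q hq => lt_of_lt_of_le hq hxy

lemma ext_eq_of_continuousAt {F : ℝ → ℝ} (hF : Monotone F) {x : ℝ}
    (hc : ContinuousAt F x) : ext (fun q : ℚ => F q) x = F x := by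
  obtain ⟨q₀, hq₀⟩ := exists_rat_lt x
  have hne : ((fun q : ℚ => F q) '' {q : ℚ | (q : ℝ) < x}).Nonempty := ⟨F q₀, ⟨q₀, hq₀, rfl⟩⟩
  have hbdd : BddAbove ((fun q : ℚ => F q) '' {q : ℚ | (q : ℝ) < x}) := by
    refine ⟨F x, ?_⟩
    rintro z ⟨q, hq, rfl⟩
    exact hF hq.le
  refine le_antisymm (csSup_le hne ?_) ?_
  · rintro z ⟨q, hq, rfl⟩
    exact hF hq.le
  · by_contra h
    push_neg at h
    set c := ext (fun q : ℚ => F q) x with hc'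
    have hev : ∀ᶠ y in nhds x, c < F y := hc.eventually (eventually_gt_nhds h)
    obtain ⟨l, u, hx, hsub⟩ := mem_nhds_iff_exists_Ioo_subset.1 hev
    obtain ⟨q, hlq, hqx⟩ := exists_rat_btwn hx.1
    have hq : c < F q := hsub ⟨hlq, lt_trans hqx hx.2⟩
    have : F q ≤ c := le_csSup hbdd ⟨q, hqx, rfl⟩
    exact absurd hq (not_lt.2 this)

/-- `ext g` preimage of a point is order-convex when `g` is monotone. -/
lemma ext_mem_preimage_of_btwn {g : ℚ → ℝ} (hg : Monotone g) {x₁ x₂ r c : ℝ}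
    (h1 : ext g x₁ = c) (h2 : ext g x₂ = c) (hr1 : x₁ ≤ r) (hr2 : r ≤ x₂) :
    ext g r = c :=
  le_antisymm (h2 ▸ ext_monotone hg hr2) (h1 ▸ ext_monotone hg hr1)


/-- The underlying well-order of type `ω₁`. -/
def W : Type := ((Cardinal.aleph 1).ord).ToType

instance : LinearOrder W := linearOrder_toType _
instance : WellFoundedLT W := wellFoundedLT_toType _

lemma W_Iio_countable (α : W) : (Set.Iio α).Countable := by
  rw [Cardinal.countable_iff_lt_aleph_one]
  exact Cardinal.mk_Iio_ord_toType α

lemma W_mk : #W = Cardinal.aleph 1 := by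
  rw [show #W = #((Cardinal.aleph 1).ord).ToType from rfl, Cardinal.mk_toType, Cardinal.card_ord]

lemma W_uncountable : ¬ (Set.univ : Set W).Countable := by
  intro h
  have := (Cardinal.countable_iff_lt_aleph_one _).1 h
  rw [Cardinal.mk_univ, W_mk] at this
  exact lt_irrefl _ this

instance : Nonempty W := by
  rw [show W = ((Cardinal.aleph 1).ord).ToType from rfl, Ordinal.toType_nonempty_iff_ne_zero]
  intro h
  have h2 : (Cardinal.aleph 1) = 0 := by
    have := congrArg Ordinal.card h
    simpa using this
  exact absurd (h2 ▸ Cardinal.aleph0_lt_aleph_one) (by simp)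

instance countable_Iio (α : W) : Countable ↥(Set.Iio α) :=
  Set.countable_coe_iff.2 (W_Iio_countable α)

instance countable_Iic (α : W) : Countable ↥(Set.Iic α) := by
  rw [Set.countable_coe_iff, show Set.Iic α = Set.Iio α ∪ {α} by
    ext x; simp [le_iff_lt_or_eq]]
  exact (W_Iio_countable α).union (Set.countable_singleton α)

/-- A point of an interval outside a countable set. -/
lemma pick {p q : ℝ} (hpq : p < q) {C : Set ℝ} (hC : C.Countable) :
    ∃ x ∈ Set.Ioo p q, x ∉ C := by
  by_contra h
  push_neg at h
  have hsub : Set.Ioo p q ⊆ C := fun x hx => h x hx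
  have h2 := (Cardinal.countable_iff_lt_aleph_one _).1 (hC.mono hsub)
  rw [Cardinal.mk_Ioo_real hpq] at h2
  exact absurd (Cardinal.aleph_one_le_continuum.trans_lt h2) (lt_irrefl _)

variable (G : W → (ℚ → ℝ)) (lo hi : W → ℚ)

/-- The conditions imposed at stage `α` of the recursion. -/
structure Good (α : W) (prev : ∀ γ, γ < α → ℝ × ℝ) (xy : ℝ × ℝ) : Prop where
  memx : xy.1 ∈ Set.Ioo (lo α : ℝ) (hi α)
  memy : xy.2 ∈ Set.Ioo (lo α : ℝ) (hi α)
  injx : ∀ γ (h : γ < α), xy.1 ≠ (prev γ h).1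
  injy : ∀ γ (h : γ < α), xy.2 ≠ (prev γ h).2
  c1' : ∀ β, β ≤ α → ∀ γ (h : γ < α), xy.1 ≠ ext (G β) ((prev γ h).2)
  c2 : ∀ β, β ≤ α → ∀ γ (h : γ < α), ext (G β) xy.1 = (prev γ h).2 →
      ¬ (ext (G β) ⁻¹' {(prev γ h).2}).Subsingleton
  c1 : ∀ β, β ≤ α → ∀ γ (h : γ < α), xy.2 ≠ ext (G β) ((prev γ h).1)
  c1d : ∀ β, β ≤ α → xy.2 ≠ ext (G β) xy.1
  c2' : ∀ β, β ≤ α → ∀ γ (h : γ < α), ext (G β) xy.2 = (prev γ h).1 →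
      ¬ (ext (G β) ⁻¹' {(prev γ h).1}).Subsingleton
  c2d : ∀ β, β ≤ α → ext (G β) xy.2 = xy.1 → ¬ (ext (G β) ⁻¹' {xy.1}).Subsingleton

lemma step_exists (hlohi : ∀ α, lo α < hi α) (α : W) (prev : ∀ γ, γ < α → ℝ × ℝ) :
    ∃ xy : ℝ × ℝ, Good G lo hi α prev xy := by
  classical
  -- bad sets for the first coordinate
  set C1 : Set ℝ := Set.range (fun γ : ↥(Set.Iio α) => (prev γ γ.2).1) with hC1
  set C2 : Set ℝ := Set.range (fun p : ↥(Set.Iic α) × ↥(Set.Iio α) =>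
    ext (G p.1) ((prev p.2 p.2.2).2)) with hC2
  set C3 : Set ℝ := ⋃ p : ↥(Set.Iic α) × ↥(Set.Iio α),
    {x | ext (G p.1) x = (prev p.2 p.2.2).2 ∧
      (ext (G p.1) ⁻¹' {(prev p.2 p.2.2).2}).Subsingleton} with hC3
  have hC3cnt : C3.Countable := by
    apply Set.countable_iUnion
    intro p
    rcases Classical.em ((ext (G p.1) ⁻¹' {(prev p.2 p.2.2).2}).Subsingleton) with h | h
    · exact (h.anti (fun x hx => hx.1)).countable
    · refine Set.Countable.mono ?_ Set.countable_empty
      intro x hx; exact absurd hx.2 h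
  have hCcnt : (C1 ∪ C2 ∪ C3).Countable :=
    ((Set.countable_range _).union (Set.countable_range _)).union hC3cnt
  obtain ⟨x, hxmem, hxC⟩ := pick (show ((lo α : ℝ)) < (hi α : ℝ) by exact_mod_cast hlohi α) hCcnt
  -- bad sets for the second coordinate; `aval` covers both previous `a`s and `x`
  set aval : ↥(Set.Iic α) → ℝ := fun γ => if h : (γ : W) < α then (prev γ h).1 else x with haval
  set D1 : Set ℝ := Set.range (fun γ : ↥(Set.Iio α) => (prev γ γ.2).2) with hD1
  set D2 : Set ℝ := Set.range (fun p : ↥(Set.Iic α) × ↥(Set.Iic α) =>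
    ext (G p.1) (aval p.2)) with hD2
  set D3 : Set ℝ := ⋃ p : ↥(Set.Iic α) × ↥(Set.Iic α),
    {y | ext (G p.1) y = aval p.2 ∧ (ext (G p.1) ⁻¹' {aval p.2}).Subsingleton} with hD3
  have hD3cnt : D3.Countable := by
    apply Set.countable_iUnion
    intro p
    rcases Classical.em ((ext (G p.1) ⁻¹' {aval p.2}).Subsingleton) with h | h
    · exact (h.anti (fun y hy => hy.1)).countable
    · refine Set.Countable.mono ?_ Set.countable_empty
      intro y hy; exact absurd hy.2 h
  have hDcnt : (D1 ∪ D2 ∪ D3).Countable :=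
    ((Set.countable_range _).union (Set.countable_range _)).union hD3cnt
  obtain ⟨y, hymem, hyD⟩ := pick (show ((lo α : ℝ)) < (hi α : ℝ) by exact_mod_cast hlohi α) hDcnt
  refine ⟨(x, y), ?_, ?_, ?_, ?_, ?_, ?_, ?_, ?_, ?_, ?_⟩
  · exact hxmem
  · exact hymem
  · intro γ h hx
    exact hxC (Or.inl (Or.inl ⟨⟨γ, h⟩, hx.symm⟩))
  · intro γ h hy
    exact hyD (Or.inl (Or.inl ⟨⟨γ, h⟩, hy.symm⟩))
  · intro β hβ γ h hx
    exact hxC (Or.inl (Or.inr ⟨(⟨β, hβ⟩, ⟨γ, h⟩), hx.symm⟩))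
  · intro β hβ γ h heq hsub
    refine hxC (Or.inr ?_)
    exact Set.mem_iUnion.2 ⟨(⟨β, hβ⟩, ⟨γ, h⟩), heq, hsub⟩
  · intro β hβ γ h hy
    refine hyD (Or.inl (Or.inr ?_))
    refine ⟨(⟨β, hβ⟩, ⟨(γ : W), le_of_lt h⟩), ?_⟩
    simp only [haval, dif_pos h]
    exact hy.symm
  · intro β hβ hy
    refine hyD (Or.inl (Or.inr ?_))
    refine ⟨(⟨β, hβ⟩, ⟨α, le_refl α⟩), ?_⟩
    simp only [haval, dif_neg (lt_irrefl α)]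
    exact hy.symm
  · intro β hβ γ h heq hsub
    refine hyD (Or.inr (Set.mem_iUnion.2 ⟨(⟨β, hβ⟩, ⟨(γ:W), le_of_lt h⟩), ?_⟩))
    constructor
    · simpa only [haval, dif_pos h] using heq
    · simpa only [haval, dif_pos h] using hsub
  · intro β hβ heq hsub
    refine hyD (Or.inr (Set.mem_iUnion.2 ⟨(⟨β, hβ⟩, ⟨α, le_refl α⟩), ?_⟩))
    constructor
    · simpa only [haval, dif_neg (lt_irrefl α)] using heq
    · simpa only [haval, dif_neg (lt_irrefl α)] using hsub

/-- The transfinite recursion producing the two sequences. -/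
def ab (hlohi : ∀ α, lo α < hi α) : W → ℝ × ℝ :=
  WellFounded.fix (IsWellFounded.wf : WellFounded ((· < ·) : W → W → Prop))
    (fun α prev => Classical.choose (step_exists G lo hi hlohi α prev))

lemma ab_good (hlohi : ∀ α, lo α < hi α) (α : W) : Good G lo hi α (fun γ _ => ab G lo hi hlohi γ) (ab G lo hi hlohi α) := by
  have h := WellFounded.fix_eq (IsWellFounded.wf : WellFounded ((· < ·) : W → W → Prop))
    (fun α prev => Classical.choose (step_exists G lo hi hlohi α prev)) α
  rw [show ab G lo hi hlohi α = _ from h]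
  exact Classical.choose_spec (step_exists G lo hi hlohi α (fun γ _ => ab G lo hi hlohi γ))


theorem no_embed {W : Type} [LinearOrder W]
    (hsmall : ∀ α : W, (Set.Iio α).Countable)
    (hbig : ¬ (Set.univ : Set W).Countable)
    (u v : W → ℝ) (hu : Injective u) (hv : Injective v)
    (hub : ∀ x : ℝ, ∃ α, x < u α) (hlb : ∀ x : ℝ, ∃ α, u α < x)
    (G : W → (ℚ → ℝ)) (hG : Surjective G)
    (H1 : ∀ β γ α : W, β ≤ α → γ < α → v α ≠ ext (G β) (u γ))
    (H2 : ∀ β γ α : W, β ≤ α → γ ≤ α → ext (G β) (u α) = v γ →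
      ¬ (ext (G β) ⁻¹' {v γ}).Subsingleton) :
    ¬ ∃ f : Set.range u → Set.range v, StrictMono f := by
  rintro ⟨f, hf⟩
  -- the monotone extension of f to ℝ
  set F : ℝ → ℝ := fun x => sSup ((fun p => (f p : ℝ)) '' {p : Set.range u | (p : ℝ) ≤ x})
    with hF_def
  have hne : ∀ x : ℝ, ((fun p => (f p : ℝ)) '' {p : Set.range u | (p : ℝ) ≤ x}).Nonempty := by
    intro x
    obtain ⟨α, hα⟩ := hlb x
    exact ⟨f ⟨u α, mem_range_self α⟩, ⟨⟨u α, mem_range_self α⟩, hα.le, rfl⟩⟩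
  have hbdd : ∀ x : ℝ, BddAbove ((fun p => (f p : ℝ)) '' {p : Set.range u | (p : ℝ) ≤ x}) := by
    intro x
    obtain ⟨α, hα⟩ := hub x
    refine ⟨(f ⟨u α, mem_range_self α⟩ : ℝ), ?_⟩
    rintro z ⟨p, hp, rfl⟩
    have : p ≤ ⟨u α, mem_range_self α⟩ := by
      exact_mod_cast le_of_lt (lt_of_le_of_lt hp hα)
    exact Subtype.coe_le_coe.2 (hf.monotone this)
  have hFmono : Monotone F := by
    intro x y hxy
    exact csSup_le_csSup (hbdd y) (hne x) (image_mono fun p hp => le_trans hp hxy)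
  have hFu : ∀ α : W, F (u α) = (f ⟨u α, mem_range_self α⟩ : ℝ) := by
    intro α
    refine le_antisymm (csSup_le (hne _) ?_) (le_csSup (hbdd _) ⟨⟨u α, mem_range_self α⟩, by simp, rfl⟩)
    rintro z ⟨p, hp, rfl⟩
    exact Subtype.coe_le_coe.2 (hf.monotone (by exact_mod_cast hp))
  obtain ⟨β, hβ⟩ := hG fun q : ℚ => F q
  have hDcnt : {x : ℝ | ¬ ContinuousAt F x}.Countable := hFmono.countable_not_continuousAt
  -- the good stationary-ish set
  set S : Set W := {α | β ≤ α ∧ ContinuousAt F (u α)} with hS_def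
  have hScompl : (univ : Set W) ⊆ Iio β ∪ (u ⁻¹' {x | ¬ ContinuousAt F x}) ∪ S := by
    intro α _
    by_cases h1 : β ≤ α
    · by_cases h2 : ContinuousAt F (u α)
      · exact Or.inr ⟨h1, h2⟩
      · exact Or.inl (Or.inr h2)
    · exact Or.inl (Or.inl (lt_of_not_ge h1))
  have hSuncnt : ¬ S.Countable := by
    intro hS
    exact hbig (Countable.mono hScompl
      (((hsmall β).union (hDcnt.preimage hu)).union hS))
  -- for α ∈ S, define δ α with v (δ α) = f (u α)
  have hmemv : ∀ α : W, (f ⟨u α, mem_range_self α⟩ : ℝ) ∈ Set.range v :=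
    fun α => (f ⟨u α, mem_range_self α⟩).2
  set δ : W → W := fun α => (hmemv α).choose with hδ_def
  have hδ : ∀ α : W, v (δ α) = (f ⟨u α, mem_range_self α⟩ : ℝ) := fun α => (hmemv α).choose_spec
  have hg_mono : Monotone (G β) := by
    rw [hβ]; intro q q' hq; exact hFmono (by exact_mod_cast hq)
  have key : ∀ α ∈ S, ext (G β) (u α) = v (δ α) ∧ δ α ≤ α := by
    intro α hα
    have h1 : ext (G β) (u α) = F (u α) := by rw [hβ]; exact ext_eq_of_continuousAt hFmono hα.2
    have h2 : ext (G β) (u α) = v (δ α) := by rw [h1, hFu, hδ]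
    refine ⟨h2, ?_⟩
    by_contra h
    exact H1 β α (δ α) (le_of_lt (lt_of_le_of_lt hα.1 (lt_of_not_ge h))) (lt_of_not_ge h) h2.symm
  -- each α ∈ S yields a rational in the (nontrivial) fiber of `ext (G β)` over `v (δ α)`
  have hrat : ∀ α ∈ S, ∃ q : ℚ, ext (G β) (q : ℝ) = v (δ α) := by
    intro α hα
    obtain ⟨heq, hle⟩ := key α hα
    have hns := H2 β (δ α) α hα.1 hle heq
    rw [Set.not_subsingleton_iff] at hns
    obtain ⟨x₁, hx₁, x₂, hx₂, hne12⟩ := hns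
    rcases lt_or_gt_of_ne hne12 with hlt | hlt
    · obtain ⟨q, hq1, hq2⟩ := exists_rat_btwn hlt
      exact ⟨q, ext_mem_preimage_of_btwn hg_mono hx₁ hx₂ hq1.le hq2.le⟩
    · obtain ⟨q, hq1, hq2⟩ := exists_rat_btwn hlt
      exact ⟨q, ext_mem_preimage_of_btwn hg_mono hx₂ hx₁ hq1.le hq2.le⟩
  -- injectivity into ℚ gives countability of S, contradiction
  apply hSuncnt
  have : ∀ α : ↥S, ∃ q : ℚ, ext (G β) (q : ℝ) = v (δ α) := fun α => hrat α α.2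
  choose r hr using this
  have hrinj : Injective r := by
    intro α α' h
    have h1 : v (δ (α : W)) = v (δ (α' : W)) := by rw [← hr α, ← hr α', h]
    have h2 : δ (α : W) = δ (α' : W) := hv h1
    have h3 : (f ⟨u α, mem_range_self _⟩ : ℝ) = (f ⟨u α', mem_range_self _⟩ : ℝ) := by
      rw [← hδ, ← hδ, h2]
    have h4 := hf.injective (Subtype.coe_injective h3)
    have h5 : u (α : W) = u (α' : W) := congrArg Subtype.val h4
    exact Subtype.coe_injective (hu h5)
  have : Countable ↥S := ⟨⟨fun α => Encodable.encode (r α), fun a b h =>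
    hrinj (Encodable.encode_injective h)⟩⟩
  exact Set.countable_coe_iff.1 this


/-- The countable index type of rational intervals. -/
def T : Type := {pq : ℚ × ℚ // pq.1 < pq.2}

instance : Countable T := by unfold T; infer_instance
instance : Infinite T :=
  Infinite.of_injective (fun n : ℕ => (⟨((0:ℚ), (n:ℚ)+1), by positivity⟩ : T))
    (by intro m n h; simpa using congrArg (fun t : T => t.1.2) h)

lemma exists_G (CH : Cardinal.continuum.{0} = Cardinal.aleph.{0} 1) :
    ∃ G : W → (ℚ → ℝ), Surjective G := by
  have h2 : #(ℚ → ℝ) = Cardinal.continuum := by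
    have : #(ℚ → ℝ) = #ℝ ^ #ℚ := (Cardinal.power_def ℝ ℚ).symm
    rw [this, Cardinal.mk_real, Cardinal.mkRat, Cardinal.continuum_power_aleph0]
  have h1 : #(ℚ → ℝ) ≤ #W := by rw [h2, CH, W_mk]

  obtain ⟨e⟩ := (Cardinal.le_def _ _).1 h1
  exact ⟨Function.invFun e, Function.invFun_surjective e.injective⟩

lemma exists_e : Nonempty (W ≃ (T × W)) := by
  rw [← Cardinal.eq]
  rw [Cardinal.mk_prod, Cardinal.mk_eq_aleph0 T, W_mk]
  simp only [Cardinal.lift_id, Cardinal.lift_aleph0]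
  rw [Cardinal.mul_eq_max le_rfl (Cardinal.aleph0_le_aleph 1),
    max_eq_right (Cardinal.aleph0_le_aleph 1)]


lemma CH_down (CH : Cardinal.continuum.{u} = Cardinal.aleph.{u} 1) :
    Cardinal.continuum.{0} = Cardinal.aleph.{0} 1 := by
  have h : Cardinal.lift.{u} Cardinal.continuum.{0} = Cardinal.lift.{u} (Cardinal.aleph.{0} 1) := by
    rw [Cardinal.lift_continuum, Cardinal.lift_aleph]
    simpa using CH
  exact Cardinal.lift_injective h

end SierpAux

end



/-- A set of reals is `ω₁`-dense if it has no least and no greatest element and every open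
interval between two of its elements meets it in exactly `ℵ₁` points. -/
def IsOmega1Dense (A : Set ℝ) : Prop :=
  (∀ a ∈ A, ∃ b ∈ A, b < a) ∧ (∀ a ∈ A, ∃ b ∈ A, a < b) ∧
  ∀ a ∈ A, ∀ b ∈ A, a < b → Cardinal.mk ↥(A ∩ Set.Ioo a b) = Cardinal.aleph 1

open SierpAux in
/-- Sierpiński. Assuming the Continuum Hypothesis, there are two
`ω₁`-dense sets of reals which are incomparable under order-preserving embeddings
(strictly monotone increasing injections). -/
theorem sierpinski_incomparable_omega1Dense (CH : Cardinal.continuum = Cardinal.aleph 1) :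
    ∃ A B : Set ℝ, IsOmega1Dense A ∧ IsOmega1Dense B ∧
      (¬ ∃ f : A → B, StrictMono f) ∧ (¬ ∃ f : B → A, StrictMono f) := by
  have CH₀ : Cardinal.continuum.{0} = Cardinal.aleph.{0} 1 := CH_down CH
  obtain ⟨G, hG⟩ := exists_G CH₀
  obtain ⟨e⟩ := exists_e
  set lo : W → ℚ := fun α => (e α).1.val.1 with lo_def
  set hi : W → ℚ := fun α => (e α).1.val.2 with hi_def
  have hlohi : ∀ α, lo α < hi α := fun α => (e α).1.2
  set a : W → ℝ := fun α => (ab G lo hi hlohi α).1 with a_def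
  set b : W → ℝ := fun α => (ab G lo hi hlohi α).2 with b_def
  have hgood : ∀ α, Good G lo hi α (fun γ _ => ab G lo hi hlohi γ) (ab G lo hi hlohi α) :=
    ab_good G lo hi hlohi
  have ha_mem : ∀ α, a α ∈ Set.Ioo (lo α : ℝ) (hi α) := fun α => (hgood α).memx
  have hb_mem : ∀ α, b α ∈ Set.Ioo (lo α : ℝ) (hi α) := fun α => (hgood α).memy
  have ha_inj : Injective a := by
    intro α α' h
    by_contra hne
    rcases lt_or_gt_of_ne hne with hlt | hlt
    · exact (hgood α').injx α hlt h.symm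
    · exact (hgood α).injx α' hlt h
  have hb_inj : Injective b := by
    intro α α' h
    by_contra hne
    rcases lt_or_gt_of_ne hne with hlt | hlt
    · exact (hgood α').injy α hlt h.symm
    · exact (hgood α).injy α' hlt h
  have hlo_fiber : ∀ (t : T) (w : W), lo (e.symm (t, w)) = t.val.1 := by
    intro t w; rw [lo_def]; simp
  have hhi_fiber : ∀ (t : T) (w : W), hi (e.symm (t, w)) = t.val.2 := by
    intro t w; rw [hi_def]; simp
  -- density of `a` values (and `b` values) in every real interval
  have hdense : ∀ (u : W → ℝ), (∀ α, u α ∈ Set.Ioo (lo α : ℝ) (hi α)) →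
      ∀ x y : ℝ, x < y → ∃ α, u α ∈ Set.Ioo x y := by
    intro u hu x y hxy
    obtain ⟨p, hp1, hp2⟩ := exists_rat_btwn hxy
    obtain ⟨q, hq1, hq2⟩ := exists_rat_btwn hp2
    set t : T := ⟨(p, q), by exact_mod_cast hq1⟩ with t_def
    refine ⟨e.symm (t, Classical.arbitrary W), ?_⟩
    have h1 := hu (e.symm (t, Classical.arbitrary W))
    rw [hlo_fiber, hhi_fiber] at h1
    exact ⟨lt_trans hp1 h1.1, lt_trans h1.2 hq2⟩
  -- cardinality of interval intersections
  have hcard : ∀ (u : W → ℝ), (∀ α, u α ∈ Set.Ioo (lo α : ℝ) (hi α)) → Injective u →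
      ∀ x y : ℝ, x < y → Cardinal.mk ↥(Set.range u ∩ Set.Ioo x y) = Cardinal.aleph 1 := by
    intro u hu huinj x y hxy
    refine le_antisymm ?_ ?_
    · calc Cardinal.mk ↥(Set.range u ∩ Set.Ioo x y) ≤ #ℝ := Cardinal.mk_set_le _
        _ = Cardinal.aleph 1 := by rw [Cardinal.mk_real, CH₀]
    · obtain ⟨p, hp1, hp2⟩ := exists_rat_btwn hxy
      obtain ⟨q, hq1, hq2⟩ := exists_rat_btwn hp2
      set t : T := ⟨(p, q), by exact_mod_cast hq1⟩ with t_def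
      have hmem : ∀ w : W, u (e.symm (t, w)) ∈ Set.range u ∩ Set.Ioo x y := by
        intro w
        have h1 := hu (e.symm (t, w))
        rw [hlo_fiber, hhi_fiber] at h1
        exact ⟨⟨_, rfl⟩, lt_trans hp1 h1.1, lt_trans h1.2 hq2⟩
      have hinj : Injective (fun w : W => (⟨u (e.symm (t, w)), hmem w⟩ :
          ↥(Set.range u ∩ Set.Ioo x y))) := by
        intro w w' h
        have h2 : u (e.symm (t, w)) = u (e.symm (t, w')) := congrArg Subtype.val h
        have h3 := huinj h2
        have h4 := e.symm.injective h3
        exact (Prod.mk.injEq _ _ _ _ ▸ h4).2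
      calc Cardinal.aleph 1 = #W := W_mk.symm
        _ ≤ _ := Cardinal.mk_le_of_injective hinj
  have hdense_omega : ∀ (u : W → ℝ), (∀ α, u α ∈ Set.Ioo (lo α : ℝ) (hi α)) → Injective u →
      IsOmega1Dense (Set.range u) := by
    intro u hu huinj
    refine ⟨?_, ?_, ?_⟩
    · intro z hz
      obtain ⟨α, hα⟩ := hdense u hu (z - 1) z (by linarith)
      exact ⟨u α, ⟨α, rfl⟩, hα.2⟩
    · intro z hz
      obtain ⟨α, hα⟩ := hdense u hu z (z + 1) (by linarith)
      exact ⟨u α, ⟨α, rfl⟩, hα.1⟩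
    · intro z hz w hw hzw
      exact hcard u hu huinj z w hzw
  have hub : ∀ (u : W → ℝ), (∀ α, u α ∈ Set.Ioo (lo α : ℝ) (hi α)) → ∀ x : ℝ, ∃ α, x < u α := by
    intro u hu x
    obtain ⟨α, hα⟩ := hdense u hu x (x + 1) (by linarith)
    exact ⟨α, hα.1⟩
  have hlb : ∀ (u : W → ℝ), (∀ α, u α ∈ Set.Ioo (lo α : ℝ) (hi α)) → ∀ x : ℝ, ∃ α, u α < x := by
    intro u hu x
    obtain ⟨α, hα⟩ := hdense u hu (x - 1) x (by linarith)
    exact ⟨α, hα.2⟩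
  refine ⟨Set.range a, Set.range b, hdense_omega a ha_mem ha_inj, hdense_omega b hb_mem hb_inj,
    ?_, ?_⟩
  · refine no_embed W_Iio_countable W_uncountable a b ha_inj hb_inj
      (hub a ha_mem) (hlb a ha_mem) G hG ?_ ?_
    · intro β γ α hβ hγ
      exact (hgood α).c1 β hβ γ hγ
    · intro β γ α hβ hγ heq
      rcases lt_or_eq_of_le hγ with hlt | rfl
      · exact (hgood α).c2 β hβ γ hlt heq
      · exact absurd heq.symm ((hgood γ).c1d β hβ)
  · refine no_embed W_Iio_countable W_uncountable b a hb_inj ha_inj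
      (hub b hb_mem) (hlb b hb_mem) G hG ?_ ?_
    · intro β γ α hβ hγ
      exact (hgood α).c1' β hβ γ hγ
    · intro β γ α hβ hγ heq
      rcases lt_or_eq_of_le hγ with hlt | rfl
      · exact (hgood α).c2' β hβ γ hlt heq
      · exact (hgood γ).c2d β hβ heq
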